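/- In a cocartesian monoidal category (monoidal structure given by finite coproducts with initial unit 0), every object x is self-dual in the bicategory of cospans: the cospans e = (x+x →∇ x ← 0) and c = (0 → x ←∇ x+x) satisfy the snake identities up to isomorphism of cospans, i.e. the composite cospan x →ℓ x+x ←(x+∇) x+x+x →(∇+x) x+x ←r x is isomorphic to the identity cospan on x. -/

import Mathlib

open CategoryTheory CategoryTheory.Limits

universe v u

/-- A cospan from `x` to `y` in a category `C`. -/
structure Cospan (C : Type u) [Category.{v} C] (x y : C) where
  apex : C
  l : x ⟶ apex
  r : y ⟶ apex

variable {C : Type u} [Category.{v} C]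

/-- The identity cospan on `x`. -/
def Cospan.id (x : C) : Cospan C x x := ⟨x, 𝟙 x, 𝟙 x⟩

/-- Composition of cospans by pushout over the shared foot. -/
noncomputable def Cospan.comp [HasPushouts C] {x y z : C}
    (f : Cospan C x y) (g : Cospan C y z) : Cospan C x z :=
  ⟨pushout f.r g.l, f.l ≫ pushout.inl f.r g.l, g.r ≫ pushout.inr f.r g.l⟩

/-- Isomorphism of cospans: an isomorphism of apexes commuting with the legs. -/
def Cospan.Isomorphic {x y : C} (f g : Cospan C x y) : Prop :=
  ∃ e : f.apex ≅ g.apex, f.l ≫ e.hom = g.l ∧ f.r ≫ e.hom = g.r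

section Snake

variable [HasBinaryCoproducts C] [HasPushouts C] (x : C)

private noncomputable abbrev snakeF : ((x ⨿ x) ⨿ x : C) ⟶ x ⨿ x :=
  coprod.desc (𝟙 (x ⨿ x)) coprod.inr

private noncomputable abbrev snakeG : ((x ⨿ x) ⨿ x : C) ⟶ x ⨿ x :=
  coprod.map (codiag x) (𝟙 x)

private lemma snake_w : snakeF x ≫ codiag x = snakeG x ≫ codiag x := by
  apply coprod.hom_ext <;> apply_rules [coprod.hom_ext] <;> simp [codiag,coprod.inl_desc, coprod.inr_desc, coprod.inl_desc_assoc, coprod.inr_desc_assoc]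

private lemma snake_cond :
    snakeF x ≫ pushout.inl (snakeF x) (snakeG x) =
      snakeG x ≫ pushout.inr (snakeF x) (snakeG x) :=
  pushout.condition

-- key pointwise consequences of the pushout condition
private lemma snakeA :
    (coprod.inl : x ⟶ x ⨿ x) ≫ pushout.inl (snakeF x) (snakeG x) =
      coprod.inl ≫ pushout.inr (snakeF x) (snakeG x) := by
  have h := snake_cond x
  have := congrArg (fun k => (coprod.inl ≫ coprod.inl : x ⟶ (x ⨿ x) ⨿ x) ≫ k) h
  simpa [codiag, coprod.inl_desc, coprod.inr_desc, coprod.inl_desc_assoc, coprod.inr_desc_assoc] using this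

private lemma snakeB :
    (coprod.inr : x ⟶ x ⨿ x) ≫ pushout.inl (snakeF x) (snakeG x) =
      coprod.inl ≫ pushout.inr (snakeF x) (snakeG x) := by
  have h := snake_cond x
  have := congrArg (fun k => (coprod.inr ≫ coprod.inl : x ⟶ (x ⨿ x) ⨿ x) ≫ k) h
  simpa [codiag, coprod.inl_desc, coprod.inr_desc, coprod.inl_desc_assoc, coprod.inr_desc_assoc] using this

private lemma snakeC :
    (coprod.inr : x ⟶ x ⨿ x) ≫ pushout.inl (snakeF x) (snakeG x) =
      coprod.inr ≫ pushout.inr (snakeF x) (snakeG x) := by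
  have h := snake_cond x
  have := congrArg (fun k => (coprod.inr : x ⟶ (x ⨿ x) ⨿ x) ≫ k) h
  simpa [coprod.inl_desc, coprod.inr_desc, coprod.inl_desc_assoc, coprod.inr_desc_assoc] using this

end Snake

/-- The snake identity for the self-duality of `x` in cospans over a
cocartesian category: the composite cospan
`x →ℓ x+x ←(x+∇) x+x+x →(∇+x) x+x ←r x`
(i.e. `(e + 1) ∘ (1 + c)` computed via pushout, with `e`the codiagonal
evaluation and `c` the coevaluation) is isomorphic to the identity cospan. -/
theorem stmt9 [HasBinaryCoproducts C] [HasPushouts C] (x : C) :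
    ((⟨x ⨿ x, coprod.inl, coprod.desc (𝟙 (x ⨿ x)) coprod.inr⟩ :
        Cospan C x ((x ⨿ x) ⨿ x)).comp
      (⟨x ⨿ x, coprod.map (codiag x) (𝟙 x), coprod.inr⟩ :
        Cospan C ((x ⨿ x) ⨿ x) x)).Isomorphic (Cospan.id x) := by
  refine ⟨{
    hom := pushout.desc (codiag x) (codiag x) (snake_w x)
    inv := coprod.inl ≫ pushout.inl (snakeF x) (snakeG x)
    hom_inv_id := ?_
    inv_hom_id := ?_ }, ?_, ?_⟩
  · show pushout.desc (codiag x) (codiag x) (snake_w x) ≫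
        (coprod.inl ≫ pushout.inl (snakeF x) (snakeG x)) =
      𝟙 (pushout (snakeF x) (snakeG x))
    apply pushout.hom_ext
    · rw [← Category.assoc, pushout.inl_desc]
      apply coprod.hom_ext
      · simp only [codiag, coprod.inl_desc_assoc, Category.id_comp, Category.comp_id]
      · simp only [codiag, coprod.inr_desc_assoc, Category.id_comp, Category.comp_id]
        exact (snakeA x).trans (snakeB x).symm
    · rw [← Category.assoc, pushout.inr_desc]
      apply coprod.hom_ext
      · simp only [codiag, coprod.inl_desc_assoc, Category.id_comp, Category.comp_id]
        exact snakeA x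
      · simp only [codiag, coprod.inr_desc_assoc, Category.id_comp, Category.comp_id]
        exact (snakeA x).trans ((snakeB x).symm.trans (snakeC x))
  · show (coprod.inl ≫ pushout.inl (snakeF x) (snakeG x)) ≫
        pushout.desc (codiag x) (codiag x) (snake_w x) = 𝟙 x
    rw [Category.assoc, pushout.inl_desc, coprod.inl_desc]
  · simp [Cospan.comp, Cospan.id, codiag, coprod.inl_desc, coprod.inr_desc, coprod.inl_desc_assoc, coprod.inr_desc_assoc, pushout.inl_desc, pushout.inr_desc, pushout.inl_desc_assoc, pushout.inr_desc_assoc]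
  · simp [Cospan.comp, Cospan.id, codiag, coprod.inl_desc, coprod.inr_desc, coprod.inl_desc_assoc, coprod.inr_desc_assoc, pushout.inl_desc, pushout.inr_desc, pushout.inl_desc_assoc, pushout.inr_desc_assoc]
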